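/- Let (N, L, K, R, P) be twice differentiable real functions on an open interval I ⊂ (0,∞) with N, L, K positive, satisfying the full static cylindrically symmetric Einstein–Yang–Mills ODE system, and define the hamiltonian H(r) = (1/2)·N L K·(N'L'/(NL) + N'K'/(NK) + L'K'/(LK) − P'²/L² − R'²/K² + P²R²/(L²K²)). Then the product N(r)·L(r)·K(r)·H(r) is constant on I; in particular, if the hamiltonian constraint H = 0 holds at a single point of I, then H vanishes identically on I. -/

import Mathlib

open Set

/-- The full static cylindrically symmetric Einstein–Yang–Mills ODE system in
the Kasner gauge, for five radial functions `N, L, K` (metric) and `R, P`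
(Yang–Mills), stated on a set `I`. -/
def EYMSystem (N L K R P : ℝ → ℝ) (I : Set ℝ) : Prop :=
  ∀ r ∈ I,
    deriv (fun s => deriv N s * L s * K s) r =
      N r * L r * K r *
        ((deriv P r) ^ 2 / (L r) ^ 2 + (deriv R r) ^ 2 / (K r) ^ 2 +
          (P r) ^ 2 * (R r) ^ 2 / ((L r) ^ 2 * (K r) ^ 2)) ∧
    deriv (fun s => N s * deriv L s * K s) r =
      N r * L r * K r *
        (-(deriv P r) ^ 2 / (L r) ^ 2 + (deriv R r) ^ 2 / (K r) ^ 2 -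
          (P r) ^ 2 * (R r) ^ 2 / ((L r) ^ 2 * (K r) ^ 2)) ∧
    deriv (fun s => N s * L s * deriv K s) r =
      N r * L r * K r *
        ((deriv P r) ^ 2 / (L r) ^ 2 - (deriv R r) ^ 2 / (K r) ^ 2 -
          (P r) ^ 2 * (R r) ^ 2 / ((L r) ^ 2 * (K r) ^ 2)) ∧
    deriv (fun s => N s * L s / K s * deriv R s) r =
      N r / (L r * K r) * (R r * (P r) ^ 2) ∧
    deriv (fun s => N s * K s / L s * deriv P s) r =
      N r / (L r * K r) * (P r * (R r) ^ 2)

/-- The hamiltonian of the one-dimensional reduced EYM system. -/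
noncomputable def EYMHamiltonian (N L K R P : ℝ → ℝ) : ℝ → ℝ := fun r =>
  (1 / 2) * (N r * L r * K r) *
    (deriv N r * deriv L r / (N r * L r) + deriv N r * deriv K r / (N r * K r) +
      deriv L r * deriv K r / (L r * K r) - (deriv P r) ^ 2 / (L r) ^ 2 -
      (deriv R r) ^ 2 / (K r) ^ 2 + (P r) ^ 2 * (R r) ^ 2 / ((L r) ^ 2 * (K r) ^ 2))

/-- On an open set, a `C²` function and its derivative both have derivatives
at every point of the set. -/
lemma eym_aux_derivs {f : ℝ → ℝ} {I : Set ℝ} (hI : IsOpen I)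
    (hf : ContDiffOn ℝ 2 f I) {r : ℝ} (hr : r ∈ I) :
    HasDerivAt f (deriv f r) r ∧ HasDerivAt (deriv f) (deriv (deriv f) r) r := by
  have h1 : DifferentiableOn ℝ f I := hf.differentiableOn (by norm_num)
  have h2 : ContDiffOn ℝ 1 (deriv f) I := hf.deriv_of_isOpen hI (by norm_num)
  have h3 : DifferentiableOn ℝ (deriv f) I := h2.differentiableOn one_ne_zero
  exact ⟨(h1.differentiableAt (hI.mem_nhds hr)).hasDerivAt,
         (h3.differentiableAt (hI.mem_nhds hr)).hasDerivAt⟩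

/-- Along every solution of the EYM system the product
`N L K H` of the hamiltonian with `N L K` is constant on the interval `I`;
in particular, if the hamiltonian constraint `H = 0` holds at one point of
`I`, then `H` vanishes identically on `I`. -/
theorem stmt_8 (N L K R P : ℝ → ℝ) (I : Set ℝ)
    (hIopen : IsOpen I) (hIconn : IsPreconnected I) (hIsub : I ⊆ Ioi 0)
    (hN : ∀ r ∈ I, 0 < N r) (hL : ∀ r ∈ I, 0 < L r) (hK : ∀ r ∈ I, 0 < K r)
    (hNd : ContDiffOn ℝ 2 N I) (hLd : ContDiffOn ℝ 2 L I)
    (hKd : ContDiffOn ℝ 2 K I) (hRd : ContDiffOn ℝ 2 R I)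
    (hPd : ContDiffOn ℝ 2 P I)
    (h : EYMSystem N L K R P I) :
    (∀ r ∈ I, ∀ s ∈ I,
        N r * L r * K r * EYMHamiltonian N L K R P r =
          N s * L s * K s * EYMHamiltonian N L K R P s) ∧
    ((∃ r₀ ∈ I, EYMHamiltonian N L K R P r₀ = 0) →
        ∀ r ∈ I, EYMHamiltonian N L K R P r = 0) := by
  -- the conserved quantity, written without divisions
  set Fn : ℝ → ℝ := fun s => (1/2 : ℝ) *
      (N s * L s * K s * (deriv N s * deriv L s * K s + deriv N s * L s * deriv K s
        + N s * deriv L s * deriv K s)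
       - (N s * K s * deriv P s) * (N s * K s * deriv P s)
       - (N s * L s * deriv R s) * (N s * L s * deriv R s)
       + (N s * P s * R s) * (N s * P s * R s)) with hFn
  -- Fn agrees with N L K · H on I
  have hEq : ∀ r ∈ I, Fn r = N r * L r * K r * EYMHamiltonian N L K R P r := by
    intro r hr
    have hn := (hN r hr).ne'
    have hl := (hL r hr).ne'
    have hk := (hK r hr).ne'
    simp only [hFn, EYMHamiltonian]
    field_simp
  -- Fn has zero derivative on I
  have key : ∀ r ∈ I, HasDerivAt Fn 0 r := by
    intro r hr
    obtain ⟨hNa, hNb⟩ := eym_aux_derivs hIopen hNd hr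
    obtain ⟨hLa, hLb⟩ := eym_aux_derivs hIopen hLd hr
    obtain ⟨hKa, hKb⟩ := eym_aux_derivs hIopen hKd hr
    obtain ⟨hRa, hRb⟩ := eym_aux_derivs hIopen hRd hr
    obtain ⟨hPa, hPb⟩ := eym_aux_derivs hIopen hPd hr
    have hn := (hN r hr).ne'
    have hl := (hL r hr).ne'
    have hk := (hK r hr).ne'
    obtain ⟨e1, e2, e3, e4, e5⟩ := h r hr
    have E1 := (((hNb.mul hLa).mul hKa).deriv).symm.trans e1
    have E2 := (((hNa.mul hLb).mul hKa).deriv).symm.trans e2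
    have E3 := (((hNa.mul hLa).mul hKb).deriv).symm.trans e3
    have E4 := ((((hNa.mul hLa).div hKa hk).mul hRb).deriv).symm.trans e4
    have E5 := ((((hNa.mul hKa).div hLa hl).mul hPb).deriv).symm.trans e5
    simp only [Pi.mul_apply, Pi.div_apply, Pi.add_apply, Pi.sub_apply] at E1 E2 E3 E4 E5
    field_simp at E1 E2 E3 E4 E5
    have hT1 := ((hNa.mul hLa).mul hKa).mul
      ((((hNb.mul hLb).mul hKa).add ((hNb.mul hLa).mul hKb)).add ((hNa.mul hLb).mul hKb))
    have hT2 := ((hNa.mul hKa).mul hPb).mul ((hNa.mul hKa).mul hPb)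
    have hT3 := ((hNa.mul hLa).mul hRb).mul ((hNa.mul hLa).mul hRb)
    have hT4 := ((hNa.mul hPa).mul hRa).mul ((hNa.mul hPa).mul hRa)
    have hF := (((hT1.sub hT2).sub hT3).add hT4).const_mul ((1:ℝ)/2)
    refine hF.congr_deriv (Eq.symm ?_)
    have hM : (L r)^4 * (K r)^4 ≠ 0 := by positivity
    simp only [Pi.mul_apply, Pi.div_apply, Pi.add_apply, Pi.sub_apply]
    apply mul_left_cancel₀ hM
    linear_combination
      (-((1:ℝ)/2) * (N r * deriv L r * K r + N r * L r * deriv K r) * (L r)^3 * (K r)^3) * E1 +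
      (-((1:ℝ)/2) * (deriv N r * L r * K r + N r * L r * deriv K r) * (L r)^3 * (K r)^3) * E2 +
      (-((1:ℝ)/2) * (deriv N r * L r * K r + N r * deriv L r * K r) * (L r)^3 * (K r)^3) * E3 +
      (N r * (L r)^4 * deriv R r * (K r)^3) * E4 +
      (N r * (K r)^4 * deriv P r * (L r)^3) * E5
  -- constancy on the convex (preconnected open) set I
  have hconv : Convex ℝ I := hIconn.ordConnected.convex
  have hdiff : DifferentiableOn ℝ Fn I := fun x hx =>
    ((key x hx).differentiableAt).differentiableWithinAt
  have hconst : ∀ r ∈ I, ∀ s ∈ I, Fn r = Fn s := by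
    intro r hr s hs
    refine hconv.is_const_of_fderivWithin_eq_zero hdiff (fun x hx => ?_) hr hs
    rw [fderivWithin_of_isOpen hIopen hx, (key x hx).hasFDerivAt.fderiv]
    ext
    simp
  have main : ∀ r ∈ I, ∀ s ∈ I,
      N r * L r * K r * EYMHamiltonian N L K R P r =
        N s * L s * K s * EYMHamiltonian N L K R P s := by
    intro r hr s hs
    rw [← hEq r hr, ← hEq s hs]
    exact hconst r hr s hs
  refine ⟨main, ?_⟩
  rintro ⟨r₀, hr₀, hH0⟩ r hr
  have h1 := main r hr r₀ hr₀
  rw [hH0, mul_zero] at h1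
  have hpos : 0 < N r * L r * K r := by
    have := hN r hr; have := hL r hr; have := hK r hr; positivity
  exact (mul_eq_zero.mp h1).resolve_left (ne_of_gt hpos)
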